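/- A binary symmetric matrix X ∈ {0,1}^{n×n} is positive semidefinite if and only if it contains neither a dominated diagonal (indices i ≠ j with X_{ii} = 0 and X_{ij} = 1) nor a conflicting vertex (distinct indices i, j, k with X_{ii} = X_{ij} = X_{ik} = X_{jj} = X_{kk} = 1 and X_{jk} = 0). -/

import Mathlib

theorem binary_psd_iff_no_dominated_diagonal_no_conflicting_vertex {n : ℕ}
    (X : Matrix (Fin n) (Fin n) ℝ) (hsym : X.IsSymm)
    (hbin : ∀ i j, X i j = 0 ∨ X i j = 1) :
    X.PosSemidef ↔
      (¬ ∃ i j, i ≠ j ∧ X i i = 0 ∧ X i j = 1) ∧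
      (¬ ∃ i j k, i ≠ j ∧ i ≠ k ∧ j ≠ k ∧
        X i i = 1 ∧ X i j = 1 ∧ X i k = 1 ∧ X j j = 1 ∧ X k k = 1 ∧ X j k = 0) := by
  classical
  constructor
  · intro hpsd
    constructor
    · rintro ⟨i, j, hij, hii, hXij⟩
      set v : Fin n → ℝ := fun l => (if l = i then (-1:ℝ) else 0) + (if l = j then 1 else 0)
        with hv
      have h := hpsd.dotProduct_mulVec_nonneg v
      have hji : X j i = 1 := by rw [hsym.apply]; exact hXij
      simp only [star_trivial, dotProduct, Matrix.mulVec, hv, mul_add, add_mul,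
        mul_ite, ite_mul, mul_one, mul_zero, mul_neg, neg_mul, one_mul, zero_mul, neg_zero,
        neg_add, Finset.sum_neg_distrib,
        Finset.sum_add_distrib, Finset.sum_ite_eq', Finset.mem_univ, if_true] at h
      rcases hbin j j with hd | hd <;> rw [hii, hXij, hji, hd] at h <;> norm_num at h
    · rintro ⟨i, j, k, hij, hik, hjk, h1, h2, h3, h4, h5, h6⟩
      set v : Fin n → ℝ := fun l =>
        (if l = i then (-1:ℝ) else 0) + (if l = j then 1 else 0) + (if l = k then 1 else 0)
        with hv
      have h := hpsd.dotProduct_mulVec_nonneg v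
      have hji : X j i = 1 := by rw [hsym.apply]; exact h2
      have hki : X k i = 1 := by rw [hsym.apply]; exact h3
      have hkj : X k j = 0 := by rw [hsym.apply]; exact h6
      simp only [star_trivial, dotProduct, Matrix.mulVec, hv, mul_add, add_mul,
        mul_ite, ite_mul, mul_one, mul_zero, mul_neg, neg_mul, one_mul, zero_mul, neg_zero,
        neg_add, Finset.sum_neg_distrib,
        Finset.sum_add_distrib, Finset.sum_ite_eq', Finset.mem_univ, if_true] at h
      rw [h1, h2, h3, h4, h5, h6, hji, hki, hkj] at h
      norm_num at h
  · rintro ⟨hdom, hconf⟩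
    have hdiag : ∀ i j, X i j = 1 → X i i = 1 := by
      intro i j h1
      by_cases hij : i = j
      · subst hij; exact h1
      rcases hbin i i with h0 | h
      · exact absurd ⟨i, j, hij, h0, h1⟩ hdom
      · exact h
    set r : Fin n → Fin n → Prop := fun i j => X i j = 1 ∨ i = j with hr
    have rsymm : ∀ {i j}, r i j → r j i := by
      rintro i j (h | h)
      · exact Or.inl (by rw [hsym.apply]; exact h)
      · exact Or.inr h.symm
    have rtrans : ∀ {i j k}, r i j → r j k → r i k := by
      rintro i j k (h1 | rfl) (h2 | rfl)
      · -- X i j = 1, X j k = 1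
        by_cases hik : i = k
        · exact Or.inr hik
        by_cases hij : i = j
        · exact Or.inl (hij ▸ h2)
        by_cases hjk : j = k
        · exact Or.inl (hjk ▸ h1)
        rcases hbin i k with h0 | h
        · -- conflicting vertex at j with neighbors i, k
          have hji : X j i = 1 := by rw [hsym.apply]; exact h1
          have hjj : X j j = 1 := hdiag j i hji
          have hii : X i i = 1 := hdiag i j h1
          have hkk : X k k = 1 := by
            have : X k j = 1 := by rw [hsym.apply]; exact h2
            exact hdiag k j this
          exact absurd ⟨j, i, k, fun h => hij h.symm, hjk, hik, hjj, hji, h2, hii, hkk, h0⟩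
            hconf
        · exact Or.inl h
      · exact Or.inl h1
      · exact Or.inl h2
      · exact Or.inr rfl
    have hne : ∀ i : Fin n, (Finset.univ.filter (fun j => r i j)).Nonempty :=
      fun i => ⟨i, by simp [hr]⟩
    set rep : Fin n → Fin n := fun i => ((Finset.univ.filter (fun j => r i j)).min' (hne i))
      with hrepdef
    have hrmem : ∀ i, r i (rep i) := by
      intro i
      have := Finset.min'_mem (Finset.univ.filter (fun j => r i j)) (hne i)
      simpa using this
    have hrep_of_r : ∀ {i j}, r i j → rep i = rep j := by
      intro i j h
      have hset : (Finset.univ.filter (fun k => r i k)) = (Finset.univ.filter (fun k => r j k)) := by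
        ext k
        simp only [Finset.mem_filter, Finset.mem_univ, true_and]
        exact ⟨fun h' => rtrans (rsymm h) h', fun h' => rtrans h h'⟩
      simp only [hrepdef, hset]
    have hr_of_rep : ∀ {i j}, rep i = rep j → r i j := by
      intro i j h
      have h1 := hrmem i
      have h2 := hrmem j
      rw [← h] at h2
      exact rtrans h1 (rsymm h2)
    have hherm : X.IsHermitian := hsym
    refine Matrix.PosSemidef.of_dotProduct_mulVec_nonneg hherm fun x => ?_
    set u : Fin n → ℝ := fun i => if X i i = 1 then x i else 0 with hu
    have key : ∀ i j, x i * (X i j * x j) = if rep i = rep j then u i * u j else 0 := by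
      intro i j
      rcases hbin i j with h0 | h1
      · rw [h0, zero_mul, mul_zero]
        by_cases hrr : rep i = rep j
        · rw [if_pos hrr]
          have := hr_of_rep hrr
          rcases this with h | h
          · rw [h] at h0; norm_num at h0
          · subst h
            have : X i i ≠ 1 := by rw [h0]; norm_num
            simp [hu, this]
        · rw [if_neg hrr]
      · have hrr : rep i = rep j := hrep_of_r (Or.inl h1)
        have hii : X i i = 1 := hdiag i j h1
        have hjj : X j j = 1 := hdiag j i (by rw [hsym.apply]; exact h1)
        rw [if_pos hrr, h1, one_mul]
        simp [hu, hii, hjj]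
    show 0 ≤ dotProduct (star x) (X.mulVec x)
    simp only [star_trivial, dotProduct, Matrix.mulVec, Finset.mul_sum]
    calc ∑ i, ∑ j, x i * (X i j * x j)
        = ∑ i, ∑ j, if rep i = rep j then u i * u j else 0 := by
          refine Finset.sum_congr rfl fun i _ => Finset.sum_congr rfl fun j _ => key i j
      _ = ∑ i, ∑ j, ∑ c, (if rep i = c then u i else 0) * (if rep j = c then u j else 0) := by
          refine Finset.sum_congr rfl fun i _ => Finset.sum_congr rfl fun j _ => ?_
          simp [ite_mul, mul_ite, Finset.sum_ite_eq', eq_comm]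
      _ = ∑ c, ∑ i, ∑ j, (if rep i = c then u i else 0) * (if rep j = c then u j else 0) := by
          have h1 : ∀ i : Fin n, (∑ j : Fin n, ∑ c : Fin n,
              (if rep i = c then u i else 0) * (if rep j = c then u j else 0)) =
              ∑ c : Fin n, ∑ j : Fin n,
              (if rep i = c then u i else 0) * (if rep j = c then u j else 0) :=
            fun i => Finset.sum_comm
          simp only [h1]
          rw [Finset.sum_comm]
      _ = ∑ c, (∑ i, if rep i = c then u i else 0) * (∑ j, if rep j = c then u j else 0) := by
          refine Finset.sum_congr rfl fun c _ => ?_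
          rw [Finset.sum_mul_sum]
      _ ≥ 0 := Finset.sum_nonneg fun c _ => mul_self_nonneg _
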